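/- arXiv:1906.01476 — 3 statements merged into one kernel-verified Lean document; each statement's English description precedes it below -/
import Mathlib

section
/- Consider i.i.d. sampling from a probability space (U, P). Let X be a set, f : X × U → ℝ measurable in u for each x, and L* = inf_{x∈X} sup_{u∈U} f(x,u) finite. Define the tail probability t(x,ε) = P({u : f(x,u) > L* − ε}) and h(ε) = inf_{x∈X} t(x,ε). If there exists ε > 0 with h(ε) = 0, then the scenario approach is inconsistent: P^∞-almost surely it is NOT the case that lim_{N→∞} inf_{x∈X} max_{1≤i≤N} f(x,u_i) = L*. In fact, P^∞-almost surely, lim_{N→∞} inf_{x∈X} max_{1≤i≤N} f(x,u_i) ≤ L* − ε. -/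
open MeasureTheory Filter Topology
open scoped ENNReal

lemma pi_eval_preimage' {ι : Type*} [Fintype ι] [DecidableEq ι] {U : Type*} [MeasurableSpace U]
    (P : Measure U) [IsProbabilityMeasure P] (i : ι) (S : Set U) :
    Measure.pi (fun _ : ι => P) (Function.eval i ⁻¹' S) = P S := by
  have hset : Function.eval i ⁻¹' S
      = Set.pi Set.univ (Function.update (fun _ : ι => (Set.univ : Set U)) i S) := by
    ext v
    simp only [Set.mem_preimage, Set.mem_pi, Set.mem_univ, true_implies, Function.update_apply]
    constructor
    · intro hv j; by_cases hj : j = i <;> simp [hj, hv]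
    · intro hv; simpa using hv i
  rw [hset, Measure.pi_pi]
  rw [Finset.prod_eq_single i (fun j _ hj => by simp [Function.update_apply, hj])
    (by simp)]
  simp

/-- Obstruction to consistency: if the infimum over `x` of the tail probability
`P {u : f(x,u) > L* - ε}` vanishes for some `ε > 0`, then almost surely (w.r.t. the
i.i.d. product law `Q`) the limit of the scenario values stays at least `ε` below `L*`,
so the scenario approach is almost surely inconsistent. -/
theorem scenario_inconsistent_of_vanishing_tail
    {X U : Type*} [Nonempty X] [Nonempty U] [MeasurableSpace U]
    (P : Measure U) [IsProbabilityMeasure P]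
    (Q : Measure (ℕ → U)) [IsProbabilityMeasure Q]
    (hproj : ∀ N : ℕ,
      Q.map (fun ω (i : Fin N) => ω (i : ℕ)) = Measure.pi fun _ : Fin N => P)
    (f : X → U → ℝ) (hmeas : ∀ x, Measurable (f x))
    (hbdd : ∃ C, ∀ x u, |f x u| ≤ C)
    (Lstar : ℝ) (hL : Lstar = ⨅ x, ⨆ u, f x u)
    (LN : ℕ → (ℕ → U) → ℝ)
    (hLN : ∀ N ω, LN N ω = ⨅ x, ⨆ i : Fin (N + 1), f x (ω (i : ℕ)))
    (ε : ℝ) (hε : 0 < ε)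
    (h0 : ⨅ x, P {u | Lstar - ε < f x u} = 0)
    (hBmeas : ∀ N, MeasurableSet {ω : ℕ → U | LN N ω ≤ Lstar - ε}) :
    (∀ᵐ ω ∂Q, (⨆ N, LN N ω) ≤ Lstar - ε) ∧
      Q {ω | Tendsto (fun N => LN N ω) atTop (𝓝 Lstar)} = 0 := by
  obtain ⟨C, hC⟩ := hbdd
  have hfl : ∀ x u, -C ≤ f x u := fun x u => neg_le_of_abs_le (hC x u)
  -- law of each coordinate
  have hEval : ∀ (N : ℕ) (i : Fin (N + 1)) (S : Set U), MeasurableSet S →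
      Q ((fun ω : ℕ → U => ω (i : ℕ)) ⁻¹' S) = P S := by
    intro N i S hS
    have hmap : Q.map (fun ω : ℕ → U => ω (i : ℕ))
        = (Q.map (fun ω (j : Fin (N + 1)) => ω (j : ℕ))).map (fun v => v i) :=
      (Measure.map_map (measurable_pi_apply i)
        (measurable_pi_lambda _ fun j => measurable_pi_apply _)).symm
    have h1 : Q ((fun ω : ℕ → U => ω (i : ℕ)) ⁻¹' S)
        = Q.map (fun ω : ℕ → U => ω (i : ℕ)) S := by
      rw [Measure.map_apply (measurable_pi_apply (i : ℕ)) hS]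
    rw [h1, hmap, hproj (N + 1), Measure.map_apply (measurable_pi_apply i) hS]
    exact pi_eval_preimage' P i S
  -- each bad event is null
  have hBnull : ∀ N, Q {ω | ¬ LN N ω ≤ Lstar - ε} = 0 := by
    intro N
    have hSmeas : ∀ x : X, MeasurableSet {u | Lstar - ε < f x u} :=
      fun x => measurableSet_lt measurable_const (hmeas x)
    have key : ∀ x : X, Q {ω | ¬ LN N ω ≤ Lstar - ε}
        ≤ ((N + 1 : ℕ) : ℝ≥0∞) * P {u | Lstar - ε < f x u} := by
      intro x
      have hsub : {ω : ℕ → U | ¬ LN N ω ≤ Lstar - ε}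
          ⊆ ⋃ i : Fin (N + 1), (fun ω : ℕ → U => ω (i : ℕ)) ⁻¹' {u | Lstar - ε < f x u} := by
        intro ω hω
        by_contra hmem
        simp only [Set.mem_iUnion, Set.mem_preimage, Set.mem_setOf_eq, not_exists,
          not_lt] at hmem
        apply hω
        have h1 : LN N ω ≤ ⨆ i : Fin (N + 1), f x (ω (i : ℕ)) := by
          rw [hLN]
          refine ciInf_le ⟨-C, ?_⟩ x
          rintro _ ⟨y, rfl⟩
          exact le_trans (hfl y (ω 0))
            (le_ciSup (f := fun i : Fin (N + 1) => f y (ω (i : ℕ)))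
              (Set.Finite.bddAbove (Set.finite_range _)) 0)
        exact h1.trans (ciSup_le fun i => hmem i)
      calc Q {ω | ¬ LN N ω ≤ Lstar - ε}
          ≤ Q (⋃ i : Fin (N + 1), (fun ω : ℕ → U => ω (i : ℕ)) ⁻¹' {u | Lstar - ε < f x u}) :=
            measure_mono hsub
        _ ≤ ∑' i : Fin (N + 1),
              Q ((fun ω : ℕ → U => ω (i : ℕ)) ⁻¹' {u | Lstar - ε < f x u}) :=
            measure_iUnion_le _
        _ = ∑' _i : Fin (N + 1), P {u | Lstar - ε < f x u} :=
            tsum_congr fun i => hEval N i _ (hSmeas x)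
        _ = ((N + 1 : ℕ) : ℝ≥0∞) * P {u | Lstar - ε < f x u} := by
            rw [tsum_fintype, Finset.sum_const, Finset.card_univ, Fintype.card_fin, nsmul_eq_mul]
    have hle : Q {ω | ¬ LN N ω ≤ Lstar - ε}
        ≤ ((N + 1 : ℕ) : ℝ≥0∞) * ⨅ x, P {u | Lstar - ε < f x u} := by
      rw [ENNReal.mul_iInf_of_ne (Nat.cast_ne_zero.mpr (Nat.succ_ne_zero N))
        (ENNReal.natCast_ne_top _)]
      exact le_iInf key
    rw [h0, mul_zero] at hle
    exact le_antisymm hle zero_le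
  have hE : ∀ᵐ ω ∂Q, ∀ N, LN N ω ≤ Lstar - ε := by
    rw [ae_all_iff]
    intro N
    rw [ae_iff]
    exact hBnull N
  refine ⟨hE.mono fun ω hω => ciSup_le hω, ?_⟩
  have hsubset : {ω | Tendsto (fun N => LN N ω) atTop (𝓝 Lstar)}
      ⊆ {ω | ¬ ∀ N, LN N ω ≤ Lstar - ε} := by
    intro ω hω hall
    have := le_of_tendsto' hω hall
    linarith
  exact measure_mono_null hsubset (ae_iff.mp hE)
end

section
/- Let X ⊆ ℝ^n be compact, (U,d) a metric space, P a fully supported Borel probability measure on U, and f : X × U → ℝ lower semicontinuous. Then for each ε > 0 the function x ↦ t(x,ε) = P({u : f(x,u) > L* − ε}) is a strictly positive lower semicontinuous function on X, and consequently h(ε) = inf_{x∈X} t(x,ε) = min_{x∈X} t(x,ε) > 0. -/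
open MeasureTheory Filter Topology ENNReal

/-- Proposition 3: on a compact decision set `X ⊆ ℝⁿ`, with a fully supported Borel
probability measure on the uncertainty set and jointly lower semicontinuous cost,
the tail probability `x ↦ P {u : f(x,u) > L* - ε}` is strictly positive and lower
semicontinuous on `X`, hence attains a strictly positive minimum. -/
theorem tail_probability_positive_lsc_min
    {n : ℕ} {U : Type*} [MetricSpace U] [MeasurableSpace U] [BorelSpace U] [Nonempty U]
    (P : Measure U) [IsProbabilityMeasure P]
    (hfull : ∀ V : Set U, IsOpen V → V.Nonempty → 0 < P V)
    (X : Set (Fin n → ℝ)) (hX : IsCompact X) (hXne : X.Nonempty)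
    (f : (Fin n → ℝ) → U → ℝ)
    (hf : LowerSemicontinuous (fun p : (Fin n → ℝ) × U => f p.1 p.2))
    (hb : ∀ x ∈ X, BddAbove (Set.range (f x)))
    (hbb : BddBelow (Set.range fun x : X => ⨆ u, f x.1 u))
    (Lstar : ℝ) (hL : Lstar = ⨅ x : X, ⨆ u, f x.1 u)
    (ε : ℝ) (hε : 0 < ε) :
    LowerSemicontinuousOn (fun x => P {u | Lstar - ε < f x u}) X ∧
      (∀ x ∈ X, 0 < P {u | Lstar - ε < f x u}) ∧
      ∃ x₀ ∈ X, (∀ x ∈ X, P {u | Lstar - ε < f x₀ u} ≤ P {u | Lstar - ε < f x u}) ∧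
        0 < P {u | Lstar - ε < f x₀ u} := by
  set c : ℝ := Lstar - ε with hc
  set g : (Fin n → ℝ) → ℝ≥0∞ := fun x => P {u | c < f x u} with hg
  -- lower semicontinuity in each variable
  have hlsc_u : ∀ x, LowerSemicontinuous fun u => f x u := by
    intro x u
    exact LowerSemicontinuousAt.comp (g := fun u' => (x, u')) (hf (x, u)) ((Continuous.prodMk_right x).continuousAt)
  have hlsc_x : ∀ u, LowerSemicontinuous fun x => f x u := by
    intro u x
    exact LowerSemicontinuousAt.comp (g := fun x' => (x', u)) (hf (x, u))
      ((continuous_id.prodMk continuous_const).continuousAt)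
  have hopen : ∀ x, IsOpen {u | c < f x u} := fun x => (hlsc_u x).isOpen_preimage c
  have hmeas : ∀ x, MeasurableSet {u | c < f x u} := fun x => (hopen x).measurableSet
  -- key liminf inequality along a converging sequence
  have key : ∀ (z : ℕ → Fin n → ℝ) (x : Fin n → ℝ), Tendsto z atTop (𝓝 x) →
      g x ≤ liminf (fun k => g (z k)) atTop := by
    intro z x hz
    have hint : ∀ w : Fin n → ℝ,
        g w = ∫⁻ u, ({u | c < f w u}).indicator (fun _ => (1 : ℝ≥0∞)) u ∂P := by
      intro w
      rw [lintegral_indicator_const (hmeas w), one_mul]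
    rw [hint x]
    calc ∫⁻ u, ({u | c < f x u}).indicator (fun _ => (1 : ℝ≥0∞)) u ∂P
        ≤ ∫⁻ u, liminf (fun k => ({u | c < f (z k) u}).indicator
            (fun _ => (1 : ℝ≥0∞)) u) atTop ∂P := by
          apply lintegral_mono
          intro u
          by_cases hu : c < f x u
          · have hev : ∀ᶠ k in atTop, c < f (z k) u := by
              have := (hlsc_x u) x c hu
              exact hz.eventually this
            have : ∀ᶠ k in atTop, (1 : ℝ≥0∞) ≤
                ({u | c < f (z k) u}).indicator (fun _ => (1 : ℝ≥0∞)) u := by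
              filter_upwards [hev] with k hk
              exact (Set.indicator_of_mem hk (fun _ => (1 : ℝ≥0∞))).ge
            calc ({u | c < f x u}).indicator (fun _ => (1 : ℝ≥0∞)) u ≤ 1 := by
                  by_cases h : u ∈ {u | c < f x u} <;> simp [h]
              _ = liminf (fun _ : ℕ => (1 : ℝ≥0∞)) atTop := (liminf_const _).symm
              _ ≤ _ := liminf_le_liminf this
          · have h0 : ({u | c < f x u}).indicator (fun _ => (1 : ℝ≥0∞)) u = 0 :=
              Set.indicator_of_notMem (s := {u' | c < f x u'}) (a := u) hu _
            rw [h0]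
            exact zero_le
      _ ≤ liminf (fun k => ∫⁻ u, ({u | c < f (z k) u}).indicator
            (fun _ => (1 : ℝ≥0∞)) u ∂P) atTop :=
          lintegral_liminf_le fun k => measurable_const.indicator (hmeas (z k))
      _ = liminf (fun k => g (z k)) atTop := by
          simp only [← hint]
  -- lower semicontinuity on X
  have hLSC : LowerSemicontinuousOn g X := by
    intro x hx y hy
    by_contra h
    rw [Filter.not_eventually] at h
    have h' : ∃ᶠ x' in 𝓝 x, (g x' ≤ y ∧ x' ∈ X) :=
      (frequently_nhdsWithin_iff.1 h).mono fun x' hx' => ⟨not_lt.1 hx'.1, hx'.2⟩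
    have hcl : x ∈ closure {x' | g x' ≤ y ∧ x' ∈ X} := mem_closure_iff_frequently.2 h'
    obtain ⟨z, hzS, hzx⟩ := mem_closure_iff_seq_limit.1 hcl
    have hle : liminf (fun k => g (z k)) atTop ≤ y := by
      have : ∀ᶠ k in atTop, g (z k) ≤ y := Eventually.of_forall fun k => (hzS k).1
      calc liminf (fun k => g (z k)) atTop ≤ liminf (fun _ : ℕ => y) atTop :=
            liminf_le_liminf this
        _ = y := liminf_const _
    exact absurd (lt_of_lt_of_le hy ((key z x hzx).trans hle)) (not_lt.2 le_rfl)
  -- positivity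
  have hpos : ∀ x ∈ X, 0 < g x := by
    intro x hx
    have h1 : Lstar ≤ ⨆ u, f x u := by
      rw [hL]
      exact ciInf_le hbb (⟨x, hx⟩ : X)
    have h2 : c < ⨆ u, f x u := lt_of_lt_of_le (by linarith [hε]) h1
    obtain ⟨u, hu⟩ := exists_lt_of_lt_ciSup h2
    exact hfull _ (hopen x) ⟨u, hu⟩
  refine ⟨hLSC, hpos, ?_⟩
  -- attainment of the minimum
  set m : ℝ≥0∞ := sInf (g '' X) with hm
  obtain ⟨v, hvanti, hvt, hvS⟩ := exists_seq_tendsto_sInf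
    (hXne.image g) (OrderBot.bddBelow _)
  choose z hzX hzg using fun k => (hvS k)
  obtain ⟨x₀, hx₀X, φ, hφ, hφt⟩ := hX.tendsto_subseq hzX
  have hsub : Tendsto (fun k => g (z (φ k))) atTop (𝓝 m) := by
    have : Tendsto (fun k => v (φ k)) atTop (𝓝 m) := hvt.comp hφ.tendsto_atTop
    exact this.congr fun k => (hzg (φ k)).symm
  have hx₀ : g x₀ ≤ m := by
    by_contra hgt
    push_neg at hgt
    obtain ⟨y, hy1, hy2⟩ := exists_between hgt
    have hev : ∀ᶠ k in atTop, y < g (z (φ k)) := by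
      have := hLSC x₀ hx₀X y hy2
      have htw : Tendsto (z ∘ φ) atTop (𝓝[X] x₀) :=
        tendsto_nhdsWithin_of_tendsto_nhds_of_eventually_within _ hφt
          (Eventually.of_forall fun k => hzX (φ k))
      exact htw.eventually this
    have hev2 : ∀ᶠ k in atTop, g (z (φ k)) < y :=
      hsub.eventually_lt_const hy1
    obtain ⟨k, h1, h2⟩ := (hev.and hev2).exists
    exact absurd (h1.trans h2) (lt_irrefl y)
  refine ⟨x₀, hx₀X, fun x hx => hx₀.trans (sInf_le ⟨x, hx, rfl⟩), hpos x₀ hx₀X⟩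
end

section
/- Scenario bound via covering numbers: Let U be a compact metric space with fully supported Borel probability measure P, X a set, f : X × U → ℝ with each f(x,·) continuous, such that the family K_f = { f(x,·) : x ∈ X } is precompact in C(U) with the supremum norm. Let L* = inf_x sup_u f(x,u), t(x,ε) = P({u : f(x,u) > L* − ε}), h(ε) = inf_x t(x,ε). Then for every ε > 0 and N ∈ ℕ, P^N(B_N(ε)) ≤ N(K_f, ε/4) · exp(−N · h(ε/4)), where B_N(ε) = { (u_i)_{i=1}^N : inf_x max_i f(x,u_i) ≤ L* − ε } and N(K_f, δ) is the covering number of K_f in supremum norm. -/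
open MeasureTheory ENNReal

/-- The internal covering number: least cardinality of a finite subset `s ⊆ K` such
that every point of `K` lies within distance `ε` of `s` (`⊤` if none exists). -/
noncomputable def coveringNum {M : Type*} [MetricSpace M] (K : Set M) (ε : ℝ) : ℕ∞ :=
  ⨅ (s : Finset M) (_ : ↑s ⊆ K) (_ : ∀ a ∈ K, ∃ b ∈ s, dist a b ≤ ε), (s.card : ℕ∞)

/-- Theorem 5 (main finite-sample bound): if the family `K_f = {f(x,·) : x ∈ X}` of
continuous costs on a compact uncertainty set is precompact in `C(U)` (sup norm) and
`P` is fully supported, then the probability of the bad set `B_N(ε)` is at most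
`N(K_f, ε/4) · exp(−N · h(ε/4))`, where `h(δ) = inf_x P {u : f(x,u) > L* − δ}`. -/
theorem scenario_bad_set_bound
    {X U : Type*} [Nonempty X] [MetricSpace U] [CompactSpace U] [Nonempty U]
    [MeasurableSpace U] [BorelSpace U]
    (P : Measure U) [IsProbabilityMeasure P]
    (hfull : ∀ V : Set U, IsOpen V → V.Nonempty → 0 < P V)
    (f : X → C(U, ℝ))
    (hprecompact : IsCompact (closure (Set.range f)))
    (Lstar : ℝ) (hL : Lstar = ⨅ x, ⨆ u, f x u)
    (ε : ℝ) (hε : 0 < ε)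
    (h : ℝ) (hh : h = ⨅ x, (P {u | Lstar - ε / 4 < f x u}).toReal)
    (N : ℕ) :
    (Measure.pi fun _ : Fin N => P)
        {ω : Fin N → U | (⨅ x, ⨆ i : Fin N, f x (ω i)) ≤ Lstar - ε} ≤
      ENat.toENNReal (coveringNum (Set.range f) (ε / 4)) *
        ENNReal.ofReal (Real.exp (-(N : ℝ) * h)) := by
  classical
  set μ := Measure.pi fun _ : Fin N => P with hμdef
  set B := {ω : Fin N → U | (⨅ x, ⨆ i : Fin N, f x (ω i)) ≤ Lstar - ε} with hBdef
  have hh0 : 0 ≤ h := by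
    rw [hh]; exact le_ciInf fun x => ENNReal.toReal_nonneg
  -- the key bound for any admissible net
  have key : ∀ s : Finset C(U, ℝ), ↑s ⊆ Set.range f →
      (∀ a ∈ Set.range f, ∃ b ∈ s, dist a b ≤ ε / 4) →
      μ B ≤ (s.card : ℝ≥0∞) * ENNReal.ofReal (Real.exp (-(N : ℝ) * h)) := by
    intro s hs hnet
    -- inclusion of the bad set in a finite union
    have hsub : B ⊆ ⋃ g ∈ s, {ω : Fin N → U | ∀ i, g (ω i) ≤ Lstar - ε / 2} := by
      intro ω hω
      have h1 : (⨅ x, ⨆ i : Fin N, f x (ω i)) < Lstar - 3 * ε / 4 :=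
        lt_of_le_of_lt hω (by linarith)
      obtain ⟨x, hx⟩ := exists_lt_of_ciInf_lt h1
      obtain ⟨g, hgs, hgd⟩ := hnet (f x) ⟨x, rfl⟩
      refine Set.mem_biUnion hgs ?_
      intro i
      have h2 : f x (ω i) ≤ ⨆ j : Fin N, f x (ω j) :=
        le_ciSup (f := fun j : Fin N => f x (ω j)) (Set.Finite.bddAbove (Set.finite_range _)) i
      have h3 : dist (g (ω i)) ((f x) (ω i)) ≤ ε / 4 :=
        le_trans (ContinuousMap.dist_apply_le_dist _) (by rw [dist_comm]; exact hgd)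
      rw [Real.dist_eq] at h3
      have h4 := abs_le.mp h3
      have h2' := h2.trans_lt hx
      linarith [h4.2]
    -- single-element bound
    have hone : ∀ g ∈ s, μ {ω : Fin N → U | ∀ i, g (ω i) ≤ Lstar - ε / 2}
        ≤ ENNReal.ofReal (Real.exp (-(N : ℝ) * h)) := by
      intro g hgs
      obtain ⟨x, rfl⟩ := hs hgs
      set C := {u : U | f x u ≤ Lstar - ε / 2} with hCdef
      have hCm : MeasurableSet C :=
        (isClosed_le (f x).continuous continuous_const).measurableSet
      have hset : {ω : Fin N → U | ∀ i, f x (ω i) ≤ Lstar - ε / 2}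
          = Set.pi Set.univ (fun _ : Fin N => C) := by
        ext ω; simp [Set.mem_pi, hCdef]
      -- probability of one sample landing in C
      have hD : {u : U | Lstar - ε / 4 < f x u} ⊆ Cᶜ := by
        intro u hu
        simp only [hCdef, Set.mem_compl_iff, Set.mem_setOf_eq, not_le]
        have : Lstar - ε / 4 < f x u := hu
        linarith
      have hhx : h ≤ (P {u : U | Lstar - ε / 4 < f x u}).toReal := by
        rw [hh]
        exact ciInf_le ⟨0, fun r ⟨y, hy⟩ => hy ▸ ENNReal.toReal_nonneg⟩ x
      have h4 : h ≤ (P Cᶜ).toReal :=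
        hhx.trans (ENNReal.toReal_mono (measure_ne_top P _) (measure_mono hD))
      have h5 : (P C).toReal + (P Cᶜ).toReal = 1 := by
        have h6 : P C + P Cᶜ = 1 := by
          rw [measure_add_measure_compl hCm]; simp
        have := congrArg ENNReal.toReal h6
        rwa [ENNReal.toReal_add (measure_ne_top P _) (measure_ne_top P _),
          ENNReal.toReal_one] at this
      have hPC : P C ≤ ENNReal.ofReal (Real.exp (-h)) := by
        have h7 : (P C).toReal ≤ Real.exp (-h) := by
          have := Real.add_one_le_exp (-h)
          linarith
        calc P C = ENNReal.ofReal (P C).toReal :=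
              (ENNReal.ofReal_toReal (measure_ne_top P _)).symm
          _ ≤ ENNReal.ofReal (Real.exp (-h)) := ENNReal.ofReal_le_ofReal h7
      calc μ {ω : Fin N → U | ∀ i, f x (ω i) ≤ Lstar - ε / 2}
          = ∏ _i : Fin N, P C := by rw [hset, hμdef, Measure.pi_pi]
        _ = (P C) ^ N := by simp [Finset.prod_const]
        _ ≤ (ENNReal.ofReal (Real.exp (-h))) ^ N := pow_le_pow_left₀ zero_le hPC N
        _ = ENNReal.ofReal (Real.exp (-h) ^ N) :=
            (ENNReal.ofReal_pow (Real.exp_nonneg _) N).symm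
        _ = ENNReal.ofReal (Real.exp (-(N : ℝ) * h)) := by
            rw [← Real.exp_nat_mul]; ring_nf
    calc μ B ≤ μ (⋃ g ∈ s, {ω : Fin N → U | ∀ i, g (ω i) ≤ Lstar - ε / 2}) :=
          measure_mono hsub
      _ ≤ ∑ g ∈ s, μ {ω : Fin N → U | ∀ i, g (ω i) ≤ Lstar - ε / 2} :=
          measure_biUnion_finset_le _ _
      _ ≤ ∑ _g ∈ s, ENNReal.ofReal (Real.exp (-(N : ℝ) * h)) := Finset.sum_le_sum hone
      _ = (s.card : ℝ≥0∞) * ENNReal.ofReal (Real.exp (-(N : ℝ) * h)) := by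
          rw [Finset.sum_const, nsmul_eq_mul]
  -- assemble, comparing with the covering number
  by_cases htop : coveringNum (Set.range f) (ε / 4) = ⊤
  · rw [htop]
    rw [ENat.toENNReal_top, ENNReal.top_mul
      (ne_of_gt (ENNReal.ofReal_pos.mpr (Real.exp_pos _)))]
    exact le_top
  · obtain ⟨n, hn⟩ : ∃ n : ℕ, coveringNum (Set.range f) (ε / 4) = (n : ℕ∞) := by
      rcases (WithTop.ne_top_iff_exists.mp htop) with ⟨n, hn⟩
      exact ⟨n, hn.symm⟩
    have hex : ∃ s : Finset C(U, ℝ), ↑s ⊆ Set.range f ∧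
        (∀ a ∈ Set.range f, ∃ b ∈ s, dist a b ≤ ε / 4) ∧ s.card ≤ n := by
      by_contra hcon
      push_neg at hcon
      have hge : ((n + 1 : ℕ) : ℕ∞) ≤ coveringNum (Set.range f) (ε / 4) := by
        refine le_iInf fun s => le_iInf fun h1 => le_iInf fun h2 => ?_
        exact_mod_cast Nat.succ_le_of_lt (hcon s h1 h2)
      rw [hn] at hge
      have : n + 1 ≤ n := by exact_mod_cast hge
      omega
    obtain ⟨s, h1, h2, h3⟩ := hex
    calc μ B ≤ (s.card : ℝ≥0∞) * ENNReal.ofReal (Real.exp (-(N : ℝ) * h)) := key s h1 h2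
      _ ≤ (n : ℝ≥0∞) * ENNReal.ofReal (Real.exp (-(N : ℝ) * h)) :=
          mul_le_mul_left (by exact_mod_cast h3) _
      _ = ENat.toENNReal (coveringNum (Set.range f) (ε / 4)) *
          ENNReal.ofReal (Real.exp (-(N : ℝ) * h)) := by
          rw [hn, ENat.toENNReal_coe]
end
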